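/- For every prime p and all positive integers n and r, one has the identity in ℚ: C(n·r·p, r·p) = C(n·r, r) · Σ_{j=0}^{r·p} ((n−1)·r·p)^j · H^{(p)}_{r·p}(1^j). -/

import Mathlib

/-- `p`-restricted multiple harmonic sum `H^{(p)}_N(s₁,…,s_k)`. -/
def mhsP (p : ℕ) : ℕ → List ℕ → ℚ
  | _, [] => 1
  | N, s :: t =>
    ∑ n ∈ (Finset.Icc 1 N).filter (fun m => ¬ p ∣ m), (1 / (n : ℚ) ^ s) * mhsP p (n - 1) t

lemma mhsP_nil (p N : ℕ) : mhsP p N [] = 1 := by simp [mhsP]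

lemma mhsP_cons (p N s : ℕ) (t : List ℕ) :
    mhsP p N (s :: t) =
      ∑ n ∈ (Finset.Icc 1 N).filter (fun m => ¬ p ∣ m),
        (1 / (n : ℚ) ^ s) * mhsP p (n - 1) t := by
  simp [mhsP]

lemma mhsP_eq_zero (p : ℕ) (l : List ℕ) : ∀ N, N < l.length → mhsP p N l = 0 := by
  induction l with
  | nil => intro N h; simp at h
  | cons s t ih =>
    intro N h
    rw [mhsP_cons]
    apply Finset.sum_eq_zero
    intro n hn
    simp only [Finset.mem_filter, Finset.mem_Icc] at hn
    simp only [List.length_cons] at h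
    rw [ih (n - 1) (by omega), mul_zero]

lemma mhsP_succ (p N s : ℕ) (t : List ℕ) :
    mhsP p (N + 1) (s :: t) =
      mhsP p N (s :: t) +
        (if ¬ p ∣ (N + 1) then (1 / ((N : ℚ) + 1) ^ s) * mhsP p N t else 0) := by
  rw [mhsP_cons, mhsP_cons]
  have h : Finset.Icc 1 (N + 1) = insert (N + 1) (Finset.Icc 1 N) := by
    ext m; simp [Finset.mem_Icc]; omega
  rw [h, Finset.filter_insert]
  by_cases hd : p ∣ (N + 1)
  · simp [hd]
  · rw [if_pos hd, Finset.sum_insert (by simp [Finset.mem_Icc]), if_pos hd, add_comm]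
    congr 1
    push_cast
    norm_num

/-- Generating function identity. -/
lemma mhsP_gen (p : ℕ) (x : ℚ) :
    ∀ N, ∑ j ∈ Finset.range (N + 1), x ^ j * mhsP p N (List.replicate j 1) =
      ∏ m ∈ (Finset.Icc 1 N).filter (fun m => ¬ p ∣ m), (1 + x / m) := by
  intro N
  induction N with
  | zero => simp [mhsP_nil]
  | succ N ih =>
    have hfilt : (Finset.Icc 1 (N + 1)).filter (fun m => ¬ p ∣ m) =
        if ¬ p ∣ (N + 1) then
          insert (N + 1) ((Finset.Icc 1 N).filter (fun m => ¬ p ∣ m))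
        else (Finset.Icc 1 N).filter (fun m => ¬ p ∣ m) := by
      have h : Finset.Icc 1 (N + 1) = insert (N + 1) (Finset.Icc 1 N) := by
        ext m; simp [Finset.mem_Icc]; omega
      rw [h, Finset.filter_insert]
    -- rewrite LHS
    have key : ∑ j ∈ Finset.range (N + 2), x ^ j * mhsP p (N + 1) (List.replicate j 1) =
        (1 + (if ¬ p ∣ (N + 1) then x / ((N : ℚ) + 1) else 0)) *
          ∑ j ∈ Finset.range (N + 1), x ^ j * mhsP p N (List.replicate j 1) := by
      rw [Finset.sum_range_succ' (fun j => x ^ j * mhsP p (N + 1) (List.replicate j 1))]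
      have hstep : ∀ j, mhsP p (N + 1) (List.replicate (j + 1) 1) =
          mhsP p N (List.replicate (j + 1) 1) +
            (if ¬ p ∣ (N + 1) then (1 / ((N : ℚ) + 1)) * mhsP p N (List.replicate j 1)
              else 0) := by
        intro j
        rw [List.replicate_succ, mhsP_succ]
        simp
      simp only [hstep]
      have e1 : ∑ j ∈ Finset.range (N + 1),
          x ^ (j + 1) * (mhsP p N (List.replicate (j + 1) 1) +
            (if ¬ p ∣ (N + 1) then (1 / ((N : ℚ) + 1)) * mhsP p N (List.replicate j 1)
              else 0)) =
          (∑ j ∈ Finset.range (N + 1), x ^ (j + 1) * mhsP p N (List.replicate (j + 1) 1)) +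
          (if ¬ p ∣ (N + 1) then x / ((N : ℚ) + 1) else 0) *
            (∑ j ∈ Finset.range (N + 1), x ^ j * mhsP p N (List.replicate j 1)) := by
        rw [Finset.mul_sum]
        rw [← Finset.sum_add_distrib]
        apply Finset.sum_congr rfl
        intro j _
        by_cases hd : p ∣ (N + 1) <;> simp [hd] <;> ring
      rw [e1]
      have e2 : ∑ j ∈ Finset.range (N + 1), x ^ (j + 1) * mhsP p N (List.replicate (j + 1) 1)
          = (∑ j ∈ Finset.range (N + 1), x ^ j * mhsP p N (List.replicate j 1)) -
            x ^ 0 * mhsP p N (List.replicate 0 1) +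
            x ^ (N + 1) * mhsP p N (List.replicate (N + 1) 1) := by
        have h1' := Finset.sum_range_succ' (fun j => x ^ j * mhsP p N (List.replicate j 1)) (N + 1)
        have h2' := Finset.sum_range_succ (fun j => x ^ j * mhsP p N (List.replicate j 1)) (N + 1)
        linarith
      rw [e2, mhsP_eq_zero p (List.replicate (N + 1) 1) N (by simp)]
      simp only [List.replicate_zero, mhsP_nil, pow_zero, one_mul, mul_zero]
      ring
    rw [key, ih, hfilt]
    by_cases hd : p ∣ (N + 1)
    · simp [hd]
    · rw [if_pos hd, if_pos hd, Finset.prod_insert (by simp [Finset.mem_Icc])]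
      push_cast
      ring

/-- `C(a+b, b)` as a product in `ℚ`. -/
lemma choose_prod (a : ℕ) : ∀ b : ℕ,
    (Nat.choose (a + b) b : ℚ) = ∏ m ∈ Finset.Icc 1 b, (((a : ℚ) + m) / m) := by
  intro b
  induction b with
  | zero => simp
  | succ b ih =>
    rw [Finset.prod_Icc_succ_top (by omega), ← ih]
    have h := Nat.add_one_mul_choose_eq (a + b) b
    have hcast : ((a : ℚ) + b + 1) * (Nat.choose (a + b) b : ℚ) =
        (Nat.choose (a + b + 1) (b + 1) : ℚ) * ((b : ℚ) + 1) := by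
      exact_mod_cast h
    have hb1 : ((b : ℚ) + 1) ≠ 0 := by positivity
    have hc : ((a + (b + 1)).choose (b + 1) : ℚ) = ((a + b + 1).choose (b + 1) : ℚ) := by
      norm_num [← add_assoc]
    rw [hc]
    push_cast
    field_simp
    linear_combination -hcast

/-- For a prime `p` and positive integers `n`, `r`,
`C(nrp, rp) = C(nr, r) · ∑_{j=0}^{rp} ((n−1)rp)^j · H^{(p)}_{rp}(1^j)` in `ℚ`. -/
theorem choose_nrp_rp_eq_restricted_mhs_series (p n r : ℕ) (hp : p.Prime)
    (hn : 1 ≤ n) (hr : 1 ≤ r) :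
    (Nat.choose (n * r * p) (r * p) : ℚ) =
      (Nat.choose (n * r) r : ℚ) *
        ∑ j ∈ Finset.range (r * p + 1),
          (((n : ℚ) - 1) * (r : ℚ) * (p : ℚ)) ^ j * mhsP p (r * p) (List.replicate j 1) := by
  have hp0 : 0 < p := hp.pos
  set a : ℕ := (n - 1) * r * p with ha
  have hx : ((n : ℚ) - 1) * (r : ℚ) * (p : ℚ) = (a : ℚ) := by
    rw [ha]; push_cast [Nat.cast_sub hn]; ring
  rw [hx]
  obtain ⟨m0, rfl⟩ : ∃ m0, n = m0 + 1 := ⟨n - 1, by omega⟩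
  have h1 : (m0 + 1) * r * p = a + r * p := by
    rw [ha]; simp only [Nat.add_sub_cancel]; ring
  rw [h1, choose_prod a (r * p), mhsP_gen p (a : ℚ) (r * p)]
  -- split the product over divisibility by p
  rw [← Finset.prod_filter_mul_prod_filter_not (Finset.Icc 1 (r * p)) (fun m => p ∣ m)]
  congr 1
  · -- p-divisible part equals C(nr, r)
    have himg : (Finset.Icc 1 (r * p)).filter (fun m => p ∣ m) =
        (Finset.Icc 1 r).image (fun k => p * k) := by
      ext m
      simp only [Finset.mem_filter, Finset.mem_Icc, Finset.mem_image]
      constructor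
      · rintro ⟨⟨h1m, h2m⟩, k, rfl⟩
        have hk1 : 1 ≤ k := Nat.pos_of_ne_zero (by rintro rfl; simp at h1m)
        have hk2 : k ≤ r := Nat.le_of_mul_le_mul_left
          (by rw [mul_comm r p] at h2m; exact h2m) hp0
        exact ⟨k, ⟨hk1, hk2⟩, rfl⟩
      · rintro ⟨k, ⟨hk1, hk2⟩, rfl⟩
        refine ⟨⟨Nat.mul_pos hp0 hk1, ?_⟩, k, rfl⟩
        calc p * k ≤ p * r := Nat.mul_le_mul_left p hk2
          _ = r * p := Nat.mul_comm p r
    rw [himg, Finset.prod_image (by intro x _ y _ h; exact Nat.eq_of_mul_eq_mul_left hp0 h)]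
    have hnr : (m0 + 1) * r = (m0 + 1 - 1) * r + r := by
      simp only [Nat.add_sub_cancel]; ring
    rw [hnr, choose_prod ((m0 + 1 - 1) * r) r]
    apply Finset.prod_congr rfl
    intro k hk
    simp only [Finset.mem_Icc] at hk
    have hk0 : (k : ℚ) ≠ 0 := by exact_mod_cast Nat.one_le_iff_ne_zero.mp hk.1
    have hp0' : (p : ℚ) ≠ 0 := by exact_mod_cast hp0.ne'
    rw [ha]
    push_cast
    field_simp
  · -- non-divisible part
    apply Finset.prod_congr rfl
    intro m hm
    simp only [Finset.mem_filter, Finset.mem_Icc] at hm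
    have hm0 : (m : ℚ) ≠ 0 := by exact_mod_cast Nat.one_le_iff_ne_zero.mp hm.1.1
    field_simp
    ring
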